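/- Let F : Ω → ℝⁿ be defined on a convex domain Ω and δ ∈ (0,1]. Suppose that for every x ∈ Ω there exists ε(x) > 0 such that ⟨F(x) − F(y), x − y⟩ ≥ δ|F(x) − F(y)||x − y| whenever y ∈ Ω and |x − y| ≤ ε(x). Then F is δ-monotone on Ω, i.e. ⟨F(x) − F(y), x − y⟩ ≥ δ|F(x) − F(y)||x − y| for all x, y ∈ Ω. -/

import Mathlib

theorem stmt5 (n : ℕ) (Ω : Set (EuclideanSpace ℝ (Fin n))) (hΩ : Convex ℝ Ω)
    (F : EuclideanSpace ℝ (Fin n) → EuclideanSpace ℝ (Fin n)) (δ : ℝ)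
    (hδ0 : 0 < δ) (hδ1 : δ ≤ 1)
    (h : ∀ x ∈ Ω, ∃ ε > 0, ∀ y ∈ Ω, ‖x - y‖ ≤ ε →
      δ * ‖F x - F y‖ * ‖x - y‖ ≤ (inner ℝ (F x - F y) (x - y) : ℝ)) :
    ∀ x ∈ Ω, ∀ y ∈ Ω,
      δ * ‖F x - F y‖ * ‖x - y‖ ≤ (inner ℝ (F x - F y) (x - y) : ℝ) := by
  intro x hx y hy
  by_cases hxy : x = y
  · subst hxy; simp
  have hd : (0:ℝ) < ‖x - y‖ := by
    rw [norm_pos_iff]; exact sub_ne_zero.mpr hxy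
  set d : EuclideanSpace ℝ (Fin n) := x - y with hdef
  set γ : ℝ → EuclideanSpace ℝ (Fin n) := fun t => x + t • (y - x) with hγ
  have hγmem : ∀ t ∈ Set.Icc (0:ℝ) 1, γ t ∈ Ω := by
    intro t ht
    have h1 : (0:ℝ) ≤ 1 - t := by linarith [ht.2]
    have := hΩ hx hy h1 ht.1 (by ring)
    convert this using 1
    simp only [γ]
    module
  have hsub : ∀ s t : ℝ, γ t - γ s = (s - t) • d := by
    intro s t
    simp only [γ, hdef]
    module
  have cone_add : ∀ u v : EuclideanSpace ℝ (Fin n),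
      δ * ‖u‖ * ‖d‖ ≤ inner ℝ u d → δ * ‖v‖ * ‖d‖ ≤ inner ℝ v d →
      δ * ‖u + v‖ * ‖d‖ ≤ (inner ℝ (u + v) d : ℝ) := by
    intro u v hu hv
    have hn := norm_add_le u v
    rw [inner_add_left]
    have h2 : δ * ‖u + v‖ * ‖d‖ ≤ δ * (‖u‖ + ‖v‖) * ‖d‖ := by
      gcongr
    nlinarith [h2]
  -- from the local pair inequality, for t < s, F (γ t) - F (γ s) is in the cone
  have local_cone : ∀ t s : ℝ, t < s →
      δ * ‖F (γ t) - F (γ s)‖ * ‖γ t - γ s‖ ≤ (inner ℝ (F (γ t) - F (γ s)) (γ t - γ s) : ℝ) →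
      δ * ‖F (γ t) - F (γ s)‖ * ‖d‖ ≤ (inner ℝ (F (γ t) - F (γ s)) d : ℝ) := by
    intro t s hts hloc
    rw [hsub, real_inner_smul_right, norm_smul, Real.norm_eq_abs,
      abs_of_pos (by linarith : (0:ℝ) < s - t)] at hloc
    nlinarith [hloc, sub_pos.mpr hts]
  have symm : ∀ a b : EuclideanSpace ℝ (Fin n),
      δ * ‖F a - F b‖ * ‖a - b‖ ≤ (inner ℝ (F a - F b) (a - b) : ℝ) →
      δ * ‖F b - F a‖ * ‖b - a‖ ≤ (inner ℝ (F b - F a) (b - a) : ℝ) := by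
    intro a b hab
    rw [← neg_sub a b, ← neg_sub (F a) (F b), inner_neg_neg, norm_neg, norm_neg]
    exact hab
  set A : Set ℝ := {t | t ∈ Set.Icc (0:ℝ) 1 ∧
      δ * ‖F x - F (γ t)‖ * ‖d‖ ≤ (inner ℝ (F x - F (γ t)) d : ℝ)} with hA
  have hγ0 : γ 0 = x := by simp [γ]
  have hγ1 : γ 1 = y := by simp only [γ, one_smul]; abel
  have h0A : (0:ℝ) ∈ A := by
    refine ⟨⟨le_refl 0, zero_le_one⟩, ?_⟩
    rw [hγ0]
    simp
  have hbdd : BddAbove A := ⟨1, fun t ht => ht.1.2⟩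
  set T := sSup A with hT
  have hTmem : T ∈ Set.Icc (0:ℝ) 1 :=
    ⟨le_csSup hbdd h0A, csSup_le ⟨0, h0A⟩ (fun t ht => ht.1.2)⟩
  obtain ⟨ε, hε, hloc⟩ := h (γ T) (hγmem T hTmem)
  have hεd : 0 < ε / ‖d‖ := div_pos hε hd
  -- T ∈ A
  have hTA : T ∈ A := by
    obtain ⟨t, htA, htgt⟩ := exists_lt_of_lt_csSup ⟨0, h0A⟩ (by linarith : T - ε / ‖d‖ < T)
    have htle : t ≤ T := le_csSup hbdd htA
    rcases eq_or_lt_of_le htle with heq | hlt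
    · rwa [← heq]
    · have hdist : ‖γ T - γ t‖ ≤ ε := by
        rw [hsub, norm_smul, Real.norm_eq_abs, abs_of_neg (by linarith : t - T < 0)]
        calc -(t - T) * ‖d‖ = (T - t) * ‖d‖ := by ring
          _ ≤ ε / ‖d‖ * ‖d‖ := by nlinarith [htgt, hd]
          _ = ε := div_mul_cancel₀ ε (ne_of_gt hd)
      have hpair := symm _ _ (hloc (γ t) (hγmem t htA.1) hdist)
      have hu2 := local_cone t T hlt hpair
      have := cone_add _ _ htA.2 hu2
      rw [sub_add_sub_cancel] at this
      exact ⟨hTmem, this⟩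
  -- T = 1
  have hT1 : T = 1 := by
    by_contra hne
    have hTlt : T < 1 := lt_of_le_of_ne hTmem.2 hne
    set s : ℝ := min 1 (T + ε / ‖d‖) with hs
    have hTs : T < s := lt_min hTlt (by linarith)
    have hs1 : s ≤ 1 := min_le_left _ _
    have hsmem : s ∈ Set.Icc (0:ℝ) 1 := ⟨le_trans hTmem.1 (le_of_lt hTs), hs1⟩
    have hdist : ‖γ T - γ s‖ ≤ ε := by
      rw [hsub, norm_smul, Real.norm_eq_abs, abs_of_pos (by linarith : (0:ℝ) < s - T)]
      have : s - T ≤ ε / ‖d‖ := by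
        have := min_le_right 1 (T + ε / ‖d‖)
        linarith [this]
      calc (s - T) * ‖d‖ ≤ ε / ‖d‖ * ‖d‖ := by nlinarith
        _ = ε := div_mul_cancel₀ ε (ne_of_gt hd)
    have hpair := hloc (γ s) (hγmem s hsmem) hdist
    have hu2 := local_cone T s hTs hpair
    have := cone_add _ _ hTA.2 hu2
    rw [sub_add_sub_cancel] at this
    have hsA : s ∈ A := ⟨hsmem, this⟩
    exact absurd (le_csSup hbdd hsA) (not_le.mpr hTs)
  have hfin := hTA.2
  rw [hT1, hγ1] at hfin
  exact hfin
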